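/- Let K be a field of characteristic zero and V a vector space over K. For subspaces U₁, U₂ ⊆ ℚ^n one has N_{U₁} + N_{U₂} = N_{U₁ ∩ U₂}, where the left-hand side is the sum of subspaces of V^n. In particular, the sum of two ℚ-linear subspaces of V^n is again a ℚ-linear subspace of V^n. -/

import Mathlib

open scoped Pointwise

/-- For a `ℚ`-subspace `U ⊆ ℚ^n`, the `ℚ`-linear subspace
`N_U = {x ∈ V^n : q₁x₁ + ⋯ + qₙxₙ = 0 for every q ∈ U}` of `V^n`, where `V` is a
vector space over a field `K` of characteristic zero (so the rational coefficients
are interpreted in `K` via the canonical embedding `ℚ → K`). -/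
def ratLinSet (K V : Type*) [Field K] [AddCommGroup V] [Module K V]
    {n : ℕ} (U : Submodule ℚ (Fin n → ℚ)) : Set (Fin n → V) :=
  {x | ∀ q ∈ U, ∑ i, ((q i : K)) • x i = 0}

section Aux

variable {W : Type*} [AddCommGroup W] [Module ℚ W] {n : ℕ}

/-- The linear map `q ↦ ∑ i, q i • x i`. -/
noncomputable def coordMap (x : Fin n → W) : (Fin n → ℚ) →ₗ[ℚ] W :=
  ∑ i, (LinearMap.proj i : (Fin n → ℚ) →ₗ[ℚ] ℚ).smulRight (x i)

lemma coordMap_apply (x : Fin n → W) (q : Fin n → ℚ) :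
    coordMap x q = ∑ i, q i • x i := by
  simp [coordMap]

lemma lin_eq_sum (g : (Fin n → ℚ) →ₗ[ℚ] W) (q : Fin n → ℚ) :
    g q = ∑ i, q i • g (Pi.single i 1) := by
  have hq : (∑ i, q i • (Pi.single i 1 : Fin n → ℚ)) = q := by
    have : ∀ i : Fin n, q i • (Pi.single i 1 : Fin n → ℚ) = Pi.single i (q i) := by
      intro i
      rw [← Pi.single_smul, smul_eq_mul, mul_one]
    simp_rw [this]
    exact Finset.univ_sum_single q
  calc g q = g (∑ i, q i • (Pi.single i 1 : Fin n → ℚ)) := by rw [hq]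
    _ = ∑ i, q i • g (Pi.single i 1) := by rw [map_sum]; simp_rw [map_smul]

lemma single_sum (x : Fin n → W) (i : Fin n) :
    (∑ j, ((Pi.single i 1 : Fin n → ℚ) j) • x j) = x i := by
  rw [Finset.sum_eq_single i]
  · simp
  · intro j _ hj
    simp [Pi.single_apply, Ne.symm hj]
  · simp

lemma key (U₁ U₂ : Submodule ℚ (Fin n → ℚ)) (x : Fin n → W)
    (hx : ∀ q ∈ U₁ ⊓ U₂, ∑ i, q i • x i = 0) :
    ∃ y z : Fin n → W, (∀ q ∈ U₁, ∑ i, q i • y i = 0) ∧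
      (∀ q ∈ U₂, ∑ i, q i • z i = 0) ∧ y + z = x := by
  classical
  set f := coordMap x with hf
  have hker : U₁ ⊓ U₂ ≤ LinearMap.ker f := by
    intro q hq
    rw [LinearMap.mem_ker, coordMap_apply]
    exact hx q hq
  have hkerprod : LinearMap.ker (LinearMap.prod U₁.mkQ U₂.mkQ) = U₁ ⊓ U₂ := by
    rw [LinearMap.ker_prod, Submodule.ker_mkQ, Submodule.ker_mkQ]
  set ι : ((Fin n → ℚ) ⧸ (U₁ ⊓ U₂)) →ₗ[ℚ] ((Fin n → ℚ) ⧸ U₁) × ((Fin n → ℚ) ⧸ U₂) :=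
    (U₁ ⊓ U₂).liftQ (LinearMap.prod U₁.mkQ U₂.mkQ) hkerprod.ge with hιdef
  have hinj : Function.Injective ι := by
    rw [← LinearMap.ker_eq_bot]
    exact Submodule.ker_liftQ_eq_bot _ _ _ hkerprod.le
  set fbar := (U₁ ⊓ U₂).liftQ f hker with hfbar
  set e := LinearEquiv.ofInjective ι hinj with he
  obtain ⟨h, hh⟩ := LinearMap.exists_extend (fbar ∘ₗ (e.symm : LinearMap.range ι →ₗ[ℚ] _))
  have hhι : ∀ a, h (ι a) = fbar a := by
    intro a
    have h1 : ι a = (LinearMap.range ι).subtype (e a) := by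
      rw [he]; simp [LinearEquiv.ofInjective_apply]
    rw [h1, ← LinearMap.comp_apply, hh]
    simp
  set g₁ : (Fin n → ℚ) →ₗ[ℚ] W :=
    h ∘ₗ ((LinearMap.inl ℚ _ _) ∘ₗ U₁.mkQ) with hg₁
  set g₂ : (Fin n → ℚ) →ₗ[ℚ] W :=
    h ∘ₗ ((LinearMap.inr ℚ _ _) ∘ₗ U₂.mkQ) with hg₂
  refine ⟨fun i => g₁ (Pi.single i 1), fun i => g₂ (Pi.single i 1), ?_, ?_, ?_⟩
  · intro q hq
    rw [← lin_eq_sum g₁ q]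
    have : U₁.mkQ q = 0 := (Submodule.Quotient.mk_eq_zero U₁).2 hq
    simp [hg₁, this]
    exact map_zero h
  · intro q hq
    rw [← lin_eq_sum g₂ q]
    have : U₂.mkQ q = 0 := (Submodule.Quotient.mk_eq_zero U₂).2 hq
    simp [hg₂, this]
    exact map_zero h
  · funext i
    have hι : ι (Submodule.Quotient.mk (Pi.single i 1)) =
        (U₁.mkQ (Pi.single i 1), U₂.mkQ (Pi.single i 1)) := by
      rw [hιdef, Submodule.liftQ_apply, LinearMap.prod_apply]
      rfl
    have h2 : fbar (Submodule.Quotient.mk (Pi.single i 1)) = x i := by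
      rw [hfbar, Submodule.liftQ_apply, hf, coordMap_apply]
      exact single_sum x i
    have h3 : g₁ (Pi.single i 1) + g₂ (Pi.single i 1) = x i := by
      rw [hg₁, hg₂]
      simp only [LinearMap.comp_apply, LinearMap.inl_apply, LinearMap.inr_apply]
      rw [← map_add, Prod.mk_add_mk, add_zero, zero_add, ← hι, hhι, h2]
    exact h3

end Aux

/-- Let `K` be a field of characteristic zero and `V` a vector space
over `K`.  For subspaces `U₁, U₂ ⊆ ℚ^n` one has `N_{U₁} + N_{U₂} = N_{U₁ ∩ U₂}`
(pointwise sum of subsets of `V^n`).  In particular, the sum of two `ℚ`-linear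
subspaces of `V^n` is again a `ℚ`-linear subspace of `V^n`. -/
theorem statement2 {K V : Type*} [Field K] [CharZero K] [AddCommGroup V] [Module K V]
    (n : ℕ) (U₁ U₂ : Submodule ℚ (Fin n → ℚ)) :
    ratLinSet K V U₁ + ratLinSet K V U₂ = ratLinSet K V (U₁ ⊓ U₂)
    ∧ ∃ U₃ : Submodule ℚ (Fin n → ℚ),
        ratLinSet K V U₁ + ratLinSet K V U₂ = ratLinSet K V U₃ := by
  letI : Module ℚ V := Module.compHom V (Rat.castHom K)
  have hsmul : ∀ (q : ℚ) (v : V), q • v = (q : K) • v := fun q v => rfl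
  have h1 : ratLinSet K V U₁ + ratLinSet K V U₂ = ratLinSet K V (U₁ ⊓ U₂) := by
    ext x
    simp only [Set.mem_add]
    constructor
    · rintro ⟨y, hy, z, hz, rfl⟩
      intro q hq
      have hy' := hy q hq.1
      have hz' := hz q hq.2
      calc ∑ i, ((q i : K)) • (y + z) i
          = (∑ i, ((q i : K)) • y i) + ∑ i, ((q i : K)) • z i := by
            simp [smul_add, Finset.sum_add_distrib]
        _ = 0 := by rw [hy', hz', add_zero]
    · intro hx
      obtain ⟨y, z, hy, hz, hyz⟩ := key U₁ U₂ x (fun q hq => hx q hq)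
      exact ⟨y, hy, z, hz, hyz⟩
  exact ⟨h1, U₁ ⊓ U₂, h1⟩
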